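/- Suppose r > d > 0 and let (h*, k*) with K < h* < k* solve the smooth-fit system (opt-hk). Define, for h* < x < k*, V(x) := ((h* − K) + δ)·φ̂_{k*}(x)/φ̂_{k*}(h*) + (k* − K)·ψ̂_{h*}(x)/ψ̂_{h*}(k*). Then (x − K)⁺ ≤ V(x) ≤ (x − K)⁺ + δ for all x ∈ (h*, k*). -/

import Mathlib

open Real Set

noncomputable section

/-- A two-term generalized polynomial with distinct real exponents vanishing at two
distinct positive points has both coefficients zero. -/
lemma two_zero {p q a b x1 x2 : ℝ} (hpq : p ≠ q) (h1 : 0 < x1) (h12 : x1 < x2)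
    (hz1 : a * x1 ^ p + b * x1 ^ q = 0) (hz2 : a * x2 ^ p + b * x2 ^ q = 0) :
    a = 0 ∧ b = 0 := by
  have h2 : 0 < x2 := h1.trans h12
  have hx1p : (0:ℝ) < x1 ^ p := Real.rpow_pos_of_pos h1 p
  have hx2p : (0:ℝ) < x2 ^ p := Real.rpow_pos_of_pos h2 p
  have hne : x1 ^ q / x1 ^ p ≠ x2 ^ q / x2 ^ p := by
    rw [← Real.rpow_sub h1, ← Real.rpow_sub h2]
    rcases lt_or_gt_of_ne (sub_ne_zero.mpr (Ne.symm hpq)) with hlt | hgt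
    · exact (Real.rpow_lt_rpow_of_neg h1 h12 hlt).ne'
    · exact (Real.rpow_lt_rpow h1.le h12 hgt).ne
  have hb : b = 0 := by
    by_contra hb0
    apply hne
    rw [div_eq_div_iff hx1p.ne' hx2p.ne']
    have hkey : b * (x1 ^ q * x2 ^ p - x2 ^ q * x1 ^ p) = 0 := by
      linear_combination x2 ^ p * hz1 - x1 ^ p * hz2
    rcases mul_eq_zero.mp hkey with h | h
    · exact absurd h hb0
    · linarith [sub_eq_zero.mp h]
  have ha : a = 0 := by
    have := hz1
    rw [hb] at this
    simpa [hx1p.ne'] using this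
  exact ⟨ha, hb⟩

/-- Main analytic lemma: a function `A x^η + C x^ν` matching the payoff boundary data
with smooth fit at both ends stays strictly between the payoffs on the open interval. -/
lemma sandwich {η ν A C K δ h k : ℝ} (hη0 : 0 < η) (hν0 : ν < 0) (hηne1 : η ≠ 1)
    (hK : 0 < K) (hδ : 0 < δ) (hKh : K < h) (hhk : h < k)
    (e1 : A * h ^ η + C * h ^ ν = h - K + δ)
    (e2 : A * k ^ η + C * k ^ ν = k - K)
    (e3 : A * (η * h ^ (η - 1)) + C * (ν * h ^ (ν - 1)) = 1)
    (e4 : A * (η * k ^ (η - 1)) + C * (ν * k ^ (ν - 1)) = 1) :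
    ∀ x ∈ Set.Ioo h k,
      0 < A * x ^ η + C * x ^ ν - (x - K) ∧ A * x ^ η + C * x ^ ν - (x - K) < δ := by
  have hh0 : 0 < h := hK.trans hKh
  have hk0 : 0 < k := hh0.trans hhk
  set g : ℝ → ℝ := fun x => A * x ^ η + C * x ^ ν - (x - K) with hg_def
  set g' : ℝ → ℝ := fun x => A * (η * x ^ (η - 1)) + C * (ν * x ^ (ν - 1)) - 1 with hg'_def
  set g'' : ℝ → ℝ := fun x =>
    (A * η * (η - 1)) * x ^ (η - 2) + (C * ν * (ν - 1)) * x ^ (ν - 2) with hg''_def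
  have hg : ∀ x, x ≠ 0 → HasDerivAt g (g' x) x := by
    intro x hx
    have h1 := (Real.hasDerivAt_rpow_const (p := η) (Or.inl hx)).const_mul A
    have h2 := (Real.hasDerivAt_rpow_const (p := ν) (Or.inl hx)).const_mul C
    have h3 := (h1.add h2).sub ((hasDerivAt_id x).sub_const K)
    exact h3
  have hg' : ∀ x, x ≠ 0 → HasDerivAt g' (g'' x) x := by
    intro x hx
    have h1 := (Real.hasDerivAt_rpow_const (p := η - 1) (Or.inl hx)).const_mul (A * η)
    have h2 := (Real.hasDerivAt_rpow_const (p := ν - 1) (Or.inl hx)).const_mul (C * ν)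
    have h3 := (h1.add h2).sub_const 1
    have heq : A * η * ((η - 1) * x ^ (η - 1 - 1)) + C * ν * ((ν - 1) * x ^ (ν - 1 - 1))
        = g'' x := by
      rw [hg''_def]
      norm_num
      ring_nf
    rw [heq] at h3
    apply h3.congr_of_eventuallyEq
    filter_upwards with y using by rw [hg'_def]; simp only [Pi.add_apply]; ring_nf
  have hgh : g h = δ := by simp only [hg_def]; linarith [e1]
  have hgk : g k = 0 := by simp only [hg_def]; linarith [e2]
  have hg'h : g' h = 0 := by simp only [hg'_def]; linarith [e3]
  have hg'k : g' k = 0 := by simp only [hg'_def]; linarith [e4]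
  have hcontg : ∀ {s t : ℝ}, 0 < s → ContinuousOn g (Icc s t) := by
    intro s t hs
    exact fun x hx => ((hg x (lt_of_lt_of_le hs hx.1).ne').continuousAt).continuousWithinAt
  have hcontg' : ∀ {s t : ℝ}, 0 < s → ContinuousOn g' (Icc s t) := by
    intro s t hs
    exact fun x hx => ((hg' x (lt_of_lt_of_le hs hx.1).ne').continuousAt).continuousWithinAt
  -- main claim: g' < 0 on Ioo h k
  have main : ∀ x ∈ Ioo h k, g' x < 0 := by
    by_contra hcon
    push_neg at hcon
    obtain ⟨x0, hx0, hx0ge⟩ := hcon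
    obtain ⟨c0, hc0, hc0v⟩ := exists_hasDerivAt_eq_slope g g' hhk (hcontg hh0)
      (fun x hx => hg x (hh0.trans hx.1).ne')
    rw [hgk, hgh] at hc0v
    have hc0neg : g' c0 < 0 := by
      rw [hc0v]
      apply div_neg_of_neg_of_pos <;> linarith
    have hzero : ∃ z ∈ Ioo h k, g' z = 0 := by
      rcases eq_or_lt_of_le hx0ge with heq | hpos
      · exact ⟨x0, hx0, heq.symm⟩
      rcases lt_trichotomy c0 x0 with hlt | heq | hgt
      · obtain ⟨z, hzmem, hzv⟩ := intermediate_value_Icc hlt.le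
          (hcontg' (hh0.trans hc0.1)) ⟨hc0neg.le, hx0ge⟩
        exact ⟨z, ⟨lt_of_lt_of_le hc0.1 hzmem.1, lt_of_le_of_lt hzmem.2 hx0.2⟩, hzv⟩
      · exact absurd (heq ▸ hc0neg) (by linarith)
      · obtain ⟨z, hzmem, hzv⟩ := intermediate_value_Icc' hgt.le
          (hcontg' (hh0.trans hx0.1)) ⟨hc0neg.le, hx0ge⟩
        exact ⟨z, ⟨lt_of_lt_of_le hx0.1 hzmem.1, lt_of_le_of_lt hzmem.2 hc0.2⟩, hzv⟩
    obtain ⟨z, hz, hgz⟩ := hzero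
    obtain ⟨y1, hy1, hy1v⟩ := exists_hasDerivAt_eq_zero hz.1 (hcontg' hh0)
      (hg'h.trans hgz.symm) (fun x hx => hg' x (hh0.trans hx.1).ne')
    obtain ⟨y2, hy2, hy2v⟩ := exists_hasDerivAt_eq_zero hz.2 (hcontg' (hh0.trans hz.1))
      (hgz.trans hg'k.symm) (fun x hx => hg' x ((hh0.trans hz.1).trans hx.1).ne')
    have hy12 : y1 < y2 := hy1.2.trans hy2.1
    have hy1pos : 0 < y1 := hh0.trans hy1.1
    have hpq : (η : ℝ) - 2 ≠ ν - 2 := by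
      intro heq
      have : η = ν := by linarith
      linarith
    obtain ⟨hA', hC'⟩ := two_zero hpq hy1pos hy12 hy1v hy2v
    have hA : A = 0 := by
      rcases mul_eq_zero.mp hA' with h' | h'
      · rcases mul_eq_zero.mp h' with h'' | h''
        · exact h''
        · exact absurd h'' hη0.ne'
      · exact absurd (by linarith : η = 1) hηne1
    have hC : C = 0 := by
      rcases mul_eq_zero.mp hC' with h' | h'
      · rcases mul_eq_zero.mp h' with h'' | h''
        · exact h''
        · exact absurd h'' hν0.ne
      · exact absurd h' (by intro hh; linarith [sub_eq_zero.mp hh])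
    rw [hA, hC] at e3
    simp at e3
  have hanti : StrictAntiOn g (Icc h k) := by
    apply strictAntiOn_of_deriv_neg (convex_Icc h k) (hcontg hh0)
    intro x hx
    rw [interior_Icc] at hx
    rw [(hg x (hh0.trans hx.1).ne').deriv]
    exact main x hx
  intro x hx
  have h1 : g x < g h := hanti (left_mem_Icc.mpr hhk.le) ⟨hx.1.le, hx.2.le⟩ hx.1
  have h2 : g k < g x := hanti ⟨hx.1.le, hx.2.le⟩ (right_mem_Icc.mpr hhk.le) hx.2
  rw [hgh] at h1; rw [hgk] at h2
  exact ⟨h2, h1⟩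

/-- Algebraic lemma solving for the coefficients and the smooth-fit equations. -/
lemma coeffs {a b c e h k K δ η ν A C : ℝ} (hb : b ≠ 0) (hc : c ≠ 0)
    (hh : h ≠ 0) (hk : k ≠ 0) (hW : b * c - e * a ≠ 0)
    (hA : A = (k - K) / (c - a / b * e) - (h - K + δ) / (b - e / c * a) * (e / c))
    (hC : C = (h - K + δ) / (b - e / c * a) - (k - K) / (c - a / b * e) * (a / b))
    (key1 : (h - K + δ) * (ν * (b * c) - e * (η * a)) =
      h * (b * c - e * a) - a * b * (η - ν) * (k - K))
    (key2 : (k - K) * (η * (c * b) - a * (ν * e)) =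
      k * (b * c - a * e) + c * e * (η - ν) * (h - K + δ)) :
    A * a + C * b = h - K + δ ∧ A * c + C * e = k - K ∧
      A * (η * (a / h)) + C * (ν * (b / h)) = 1 ∧
      A * (η * (c / k)) + C * (ν * (e / k)) = 1 := by
  have hDφ : b - e / c * a = (b * c - e * a) / c := by field_simp
  have hDψ : c - a / b * e = (b * c - e * a) / b := by field_simp
  have hAW : A * (b * c - e * a) = (k - K) * b - (h - K + δ) * e := by
    rw [hA, hDφ, hDψ]; field_simp
  have hCW : C * (b * c - e * a) = (h - K + δ) * c - (k - K) * a := by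
    rw [hC, hDφ, hDψ]; field_simp
  have e1 : A * a + C * b = h - K + δ := by
    apply mul_right_cancel₀ hW
    linear_combination a * hAW + b * hCW
  have e2 : A * c + C * e = k - K := by
    apply mul_right_cancel₀ hW
    linear_combination c * hAW + e * hCW
  have e3h : A * (η * a) + C * (ν * b) = h := by
    apply mul_right_cancel₀ hW
    linear_combination (η * a) * hAW + (ν * b) * hCW + key1
  have e4k : A * (η * c) + C * (ν * e) = k := by
    apply mul_right_cancel₀ hW
    linear_combination (η * c) * hAW + (ν * e) * hCW + key2
  refine ⟨e1, e2, ?_, ?_⟩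
  · field_simp
    linear_combination e3h
  · field_simp
    linear_combination e4k

set_option maxHeartbeats 1000000 in
/-- For `r > d > 0` and a solution `(h*, k*)` of the smooth-fit system (opt-hk), the candidate
value function `V` on `(h*, k*)` satisfies `(x − K)⁺ ≤ V(x) ≤ (x − K)⁺ + δ`. -/
theorem candidate_value_between_payoffs (r d σ K δ : ℝ)
    (hrd : r > d) (hd : 0 < d) (hσ : 0 < σ) (hK : 0 < K) (hδ : 0 < δ)
    (lam κ η ν B : ℝ)
    (hlam : lam = Real.sqrt (2 * r + ((r - d - σ ^ 2 / 2) / σ) ^ 2))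
    (hκ : κ = (r - d - σ ^ 2 / 2) / σ ^ 2)
    (hη : η = lam / σ - κ) (hν : ν = -(lam / σ) - κ) (hB : B = η - ν)
    (ψ φ Sd : ℝ → ℝ) (hatψ hatφ : ℝ → ℝ → ℝ)
    (hψ : ψ = fun x => x ^ η) (hφ : φ = fun x => x ^ ν)
    (hhatψ : hatψ = fun h x => ψ x - (ψ h / φ h) * φ x)
    (hhatφ : hatφ = fun k x => φ x - (φ k / ψ k) * ψ x)
    (hSd : Sd = fun x => x ^ (-(2 * (r - d) / σ ^ 2)))
    (h k : ℝ) (hKh : K < h) (hhk : h < k)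
    (hsys1 : hatφ k h / Sd h - (deriv (hatφ k) h / Sd h) * ((h - K) + δ) =
      B * (k - K) / ψ k)
    (hsys2 : hatψ h k / Sd k - (deriv (hatψ h) k / Sd k) * (k - K) =
      -B * ((h - K) + δ) / φ h)
    (V : ℝ → ℝ)
    (hV : ∀ x ∈ Set.Ioo h k,
      V x = ((h - K) + δ) * hatφ k x / hatφ k h + (k - K) * hatψ h x / hatψ h k) :
    ∀ x ∈ Set.Ioo h k, max (x - K) 0 ≤ V x ∧ V x ≤ max (x - K) 0 + δ := by
  have hr : 0 < r := hd.trans hrd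
  have hh0 : 0 < h := hK.trans hKh
  have hk0 : 0 < k := hh0.trans hhk
  set m' : ℝ := (r - d - σ ^ 2 / 2) / σ with hm'
  have hlam2 : lam ^ 2 = 2 * r + m' ^ 2 := by
    rw [hlam]; exact Real.sq_sqrt (by positivity)
  have hlamnn : 0 ≤ lam := hlam ▸ Real.sqrt_nonneg _
  have hκ' : κ = m' / σ := by rw [hκ, hm', div_div]; ring_nf
  have hησ : η * σ = lam - m' := by rw [hη, hκ']; field_simp
  have hνσ : ν * σ = -lam - m' := by rw [hν, hκ']; field_simp
  have hη0 : 0 < η := by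
    rcases le_or_gt η 0 with hle | hlt
    · exfalso
      have hns : η * σ ≤ 0 := mul_nonpos_of_nonpos_of_nonneg hle hσ.le
      rw [hησ] at hns
      nlinarith [hlam2, hlamnn, hr,
        mul_nonneg (by linarith : (0:ℝ) ≤ m' - lam) (by linarith : (0:ℝ) ≤ m' + lam)]
    · exact hlt
  have hν0 : ν < 0 := by
    rcases le_or_gt ν 0 with hle | hlt
    swap
    · exfalso
      have hns : 0 ≤ ν * σ := mul_nonneg hlt.le hσ.le
      rw [hνσ] at hns
      nlinarith [hlam2, hlamnn, hr,
        mul_nonneg (by linarith : (0:ℝ) ≤ -m' - lam) (by linarith : (0:ℝ) ≤ -m' + lam)]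
    rcases eq_or_lt_of_le hle with heq | hlt'
    · exfalso
      have h0 : ν * σ = 0 := by rw [heq]; ring
      rw [hνσ] at h0
      nlinarith [hlam2, hlamnn, hr]
    · exact hlt'
  have hm'σ : m' * σ = r - d - σ ^ 2 / 2 := by rw [hm']; field_simp
  have hquad : σ ^ 2 / 2 * η ^ 2 + (r - d - σ ^ 2 / 2) * η - r = 0 := by
    rw [← hm'σ]
    linear_combination ((σ * η + lam - m') / 2 + m') * hησ + (1 / 2) * hlam2
  have hηne1 : η ≠ 1 := by
    intro h1
    rw [h1] at hquad
    norm_num at hquad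
    linarith
  -- the four powers
  have ha : 0 < h ^ η := Real.rpow_pos_of_pos hh0 η
  have hb : 0 < h ^ ν := Real.rpow_pos_of_pos hh0 ν
  have hc : 0 < k ^ η := Real.rpow_pos_of_pos hk0 η
  have he : 0 < k ^ ν := Real.rpow_pos_of_pos hk0 ν
  -- cross inequality : k^ν * h^η < h^ν * k^η
  have hW : k ^ ν * h ^ η < h ^ ν * k ^ η := by
    have ht : 1 < k / h := (one_lt_div hh0).mpr hhk
    have := Real.rpow_lt_rpow_of_exponent_lt ht (show ν < η by linarith)
    rw [Real.div_rpow hk0.le hh0.le, Real.div_rpow hk0.le hh0.le,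
      div_lt_div_iff₀ hb ha] at this
    linarith
  have hWne : h ^ ν * k ^ η - k ^ ν * h ^ η ≠ 0 := sub_ne_zero.mpr hW.ne'
  -- the exponent of Sd
  have hexp : -(2 * (r - d) / σ ^ 2) = η + ν - 1 := by
    rw [hη, hν, hκ]; field_simp; ring
  have hSdh : Sd h = h ^ η * h ^ ν / h := by
    rw [hSd]
    simp only
    rw [hexp, Real.rpow_sub hh0, Real.rpow_add hh0, Real.rpow_one]
  have hSdk : Sd k = k ^ η * k ^ ν / k := by
    rw [hSd]
    simp only
    rw [hexp, Real.rpow_sub hk0, Real.rpow_add hk0, Real.rpow_one]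
  -- derivatives of hatφ k and hatψ h
  have hφd : deriv (hatφ k) h = ν * h ^ (ν - 1) - k ^ ν / k ^ η * (η * h ^ (η - 1)) := by
    have hD : HasDerivAt (fun x : ℝ => x ^ ν - k ^ ν / k ^ η * x ^ η)
        (ν * h ^ (ν - 1) - k ^ ν / k ^ η * (η * h ^ (η - 1))) h :=
      (Real.hasDerivAt_rpow_const (Or.inl hh0.ne')).sub
        ((Real.hasDerivAt_rpow_const (Or.inl hh0.ne')).const_mul _)
    simp only [hhatφ, hψ, hφ]
    exact hD.deriv
  have hψd : deriv (hatψ h) k = η * k ^ (η - 1) - h ^ η / h ^ ν * (ν * k ^ (ν - 1)) := by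
    have hD : HasDerivAt (fun x : ℝ => x ^ η - h ^ η / h ^ ν * x ^ ν)
        (η * k ^ (η - 1) - h ^ η / h ^ ν * (ν * k ^ (ν - 1))) k :=
      (Real.hasDerivAt_rpow_const (Or.inl hk0.ne')).sub
        ((Real.hasDerivAt_rpow_const (Or.inl hk0.ne')).const_mul _)
    simp only [hhatψ, hψ, hφ]
    exact hD.deriv
  have hrm1h : ∀ p : ℝ, h ^ (p - 1) = h ^ p / h := fun p => by
    rw [Real.rpow_sub hh0, Real.rpow_one]
  have hrm1k : ∀ p : ℝ, k ^ (p - 1) = k ^ p / k := fun p => by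
    rw [Real.rpow_sub hk0, Real.rpow_one]
  -- clean versions of the system
  have key1 : (h - K + δ) * (ν * (h ^ ν * k ^ η) - k ^ ν * (η * h ^ η)) =
      h * (h ^ ν * k ^ η - k ^ ν * h ^ η) - h ^ η * h ^ ν * (η - ν) * (k - K) := by
    have hs1 := hsys1
    rw [hSdh, hφd, hB] at hs1
    simp only [hhatφ, hψ, hφ] at hs1
    rw [hrm1h, hrm1h] at hs1
    field_simp at hs1
    have hM : (h ^ η * (h ^ ν * (k ^ η * (k ^ η * (h * h)))) : ℝ) ≠ 0 := by positivity
    linear_combination -hs1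
  have key2 : (k - K) * (η * (k ^ η * h ^ ν) - h ^ η * (ν * k ^ ν)) =
      k * (h ^ ν * k ^ η - h ^ η * k ^ ν) + k ^ η * k ^ ν * (η - ν) * (h - K + δ) := by
    have hs2 := hsys2
    rw [hSdk, hψd, hB] at hs2
    simp only [hhatψ, hψ, hφ] at hs2
    rw [hrm1k, hrm1k] at hs2
    field_simp at hs2
    have hM : (h ^ ν * (h ^ ν * (k ^ η * (k ^ ν * (k * k)))) : ℝ) ≠ 0 := by positivity
    linear_combination -hs2
  -- the coefficients of the candidate value function
  set A : ℝ := (k - K) / (k ^ η - h ^ η / h ^ ν * k ^ ν) -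
      (h - K + δ) / (h ^ ν - k ^ ν / k ^ η * h ^ η) * (k ^ ν / k ^ η) with hA
  set C : ℝ := (h - K + δ) / (h ^ ν - k ^ ν / k ^ η * h ^ η) -
      (k - K) / (k ^ η - h ^ η / h ^ ν * k ^ ν) * (h ^ η / h ^ ν) with hC
  obtain ⟨e1, e2, e3', e4'⟩ := coeffs hb.ne' hc.ne' hh0.ne' hk0.ne' hWne hA hC key1 key2
  have e3 : A * (η * h ^ (η - 1)) + C * (ν * h ^ (ν - 1)) = 1 := by
    rw [hrm1h, hrm1h]; exact e3'
  have e4 : A * (η * k ^ (η - 1)) + C * (ν * k ^ (ν - 1)) = 1 := by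
    rw [hrm1k, hrm1k]; exact e4'
  have hsand := sandwich hη0 hν0 hηne1 hK hδ hKh hhk e1 e2 e3 e4
  intro x hx
  have hVx : V x = A * x ^ η + C * x ^ ν := by
    rw [hV x hx]
    simp only [hhatφ, hhatψ, hψ, hφ]
    rw [hA, hC]
    ring
  have hmax : max (x - K) 0 = x - K := max_eq_left (by linarith [hx.1] : (0:ℝ) ≤ x - K)
  obtain ⟨hlow, hhigh⟩ := hsand x hx
  rw [hVx, hmax]
  constructor <;> linarith

end
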